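/- Let a, b ∈ ℂ with a ≠ 0 and 2|b| ≤ |a|. Then the map ζ ↦ a ζ + b ζ² is injective on the unit circle S¹ = {ζ ∈ ℂ : |ζ| = 1}. -/

import Mathlib

noncomputable section

lemma unit_add_eq_two {x y : ℂ} (hx : ‖x‖ = 1) (hy : ‖y‖ = 1)
    (hxy : ‖x + y‖ = 2) : x = y := by
  have hray : SameRay ℝ x y := by
    rw [sameRay_iff_norm_add]
    simp only [hx, hy, hxy]; norm_num
  obtain ⟨u, v, hu, hv, huv, hx', hy'⟩ := hray.exists_eq_smul_add
  have hx0 : x ≠ 0 := by intro h0; simp [h0] at hx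
  -- x = u • (x+y), y = v • (x+y), with ‖x‖ = ‖y‖, so u = v
  have hnx : ‖x‖ = u * ‖x + y‖ := by
    conv_lhs => rw [hx']
    rw [norm_smul, Real.norm_of_nonneg hu]
  have hny : ‖y‖ = v * ‖x + y‖ := by
    conv_lhs => rw [hy']
    rw [norm_smul, Real.norm_of_nonneg hv]
  have hn : ‖x‖ = ‖y‖ := by simp [hx, hy]
  have hs : ‖x + y‖ = 2 := hxy
  have hne : ‖x + y‖ ≠ 0 := by simp [hs]
  have : u = v := by
    have := hnx.symm.trans (hn.trans hny)
    exact mul_right_cancel₀ hne this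
  rw [this] at hx'
  exact hx'.trans hy'.symm

/-- If `a ≠ 0` and `2|b| ≤ |a|`, the symbol `ζ ↦ a ζ + b ζ²` of `P_II` is
injective on the unit circle. -/
theorem symbol_PII_injOn_circle (a b : ℂ) (ha : a ≠ 0)
    (h : 2 * ‖b‖ ≤ ‖a‖) :
    Set.InjOn (fun ζ : ℂ => a * ζ + b * ζ ^ 2) (Metric.sphere (0 : ℂ) 1) := by
  intro x hx y hy hxy
  simp only [Metric.mem_sphere, Complex.dist_eq, sub_zero] at hx hy
  by_contra hne
  have hsub : x - y ≠ 0 := sub_ne_zero.mpr hne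
  have key : a = -b * (x + y) := by
    have : a * (x - y) = -b * (x + y) * (x - y) := by ring_nf; ring_nf at hxy; linear_combination hxy
    exact mul_right_cancel₀ hsub this
  have habs : ‖a‖ = ‖b‖ * ‖x + y‖ := by
    rw [key, norm_mul, norm_neg]
  have hb0 : b ≠ 0 := by
    intro h0; rw [h0] at habs; simp at habs; exact ha habs
  have hb0' : 0 < ‖b‖ := norm_pos_iff.mpr hb0
  have h2 : 2 ≤ ‖x + y‖ := by
    by_contra hlt
    push_neg at hlt
    have : ‖b‖ * ‖x + y‖ < ‖b‖ * 2 := by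
      exact mul_lt_mul_of_pos_left hlt hb0'
    rw [← habs, mul_comm] at this
    linarith
  have h2' : ‖x + y‖ ≤ 2 := by
    calc ‖x + y‖ ≤ ‖x‖ + ‖y‖ := norm_add_le x y
    _ = 2 := by rw [hx, hy]; norm_num
  exact hne (unit_add_eq_two hx hy (le_antisymm h2' h2))
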